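/- Let (Ω, ℱ, P) be a probability space and let U : (0,∞) → ℝ be continuously differentiable, strictly increasing and strictly concave, with U'(0+) = +∞, U'(∞) = 0 and limsup_{x→∞} x U'(x)/U(x) < 1; extend U to 0 by U(0) = lim_{x↓0} U(x) ∈ [−∞, ∞). Let D be a convex set of nonnegative random variables such that E[U(W)] is well-defined in [−∞, +∞] for every W ∈ D, and let V* ∈ D satisfy E[U(V*)] = sup_{W∈D} E[U(W)] < ∞. Then for every α > 0 and every W ∈ D with W ≥ α almost surely: V* > 0 almost surely, the random variable (W − V*)⁻ U'(V*) is integrable, and E[(W − V*)⁺ U'(V*)] ≤ E[(W − V*)⁻ U'(V*)]; that is, E[(W − V*) U'(V*)] ≤ 0. -/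

import Mathlib

open MeasureTheory Set Filter Topology ENNReal

/-- The positive part of an extended real number, as an element of `ℝ≥0∞`. -/
noncomputable def erealPosPart (x : EReal) : ℝ≥0∞ :=
  if x = ⊤ then ⊤ else ENNReal.ofReal x.toReal

/-- The utility function `U : (0,∞) → ℝ` extended to `0` by the (possibly infinite)
value `U₀ ∈ [−∞, ∞)`. -/
noncomputable def utilAt (U : ℝ → ℝ) (U₀ : EReal) (x : ℝ) : EReal :=
  if x = 0 then U₀ else (U x : EReal)

/-- The expected utility `E[U(W)] ∈ [−∞, +∞]` of a nonnegative random variable `W`,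
defined as the difference of the integrals of the positive and negative parts. -/
noncomputable def expUtil {Ω : Type*} [MeasurableSpace Ω] (P : Measure Ω)
    (U : ℝ → ℝ) (U₀ : EReal) (W : Ω → ℝ) : EReal :=
  ((∫⁻ ω, erealPosPart (utilAt U U₀ (W ω)) ∂P : ℝ≥0∞) : EReal)
    - ((∫⁻ ω, erealPosPart (-(utilAt U U₀ (W ω))) ∂P : ℝ≥0∞) : EReal)

/-- `E[U(W)]` is well-defined in `[−∞, +∞]`: the positive part or the negative part of
`U(W)` has finite integral. -/
def ExpUtilWellDef {Ω : Type*} [MeasurableSpace Ω] (P : Measure Ω)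
    (U : ℝ → ℝ) (U₀ : EReal) (W : Ω → ℝ) : Prop :=
  (∫⁻ ω, erealPosPart (utilAt U U₀ (W ω)) ∂P) ≠ ⊤
    ∨ (∫⁻ ω, erealPosPart (-(utilAt U U₀ (W ω))) ∂P) ≠ ⊤

section helpers

variable {Ω : Type*} [MeasurableSpace Ω] {P : Measure Ω}

lemma measurable_if_pos {f : ℝ → ℝ} (hf : ContinuousOn f (Set.Ioi 0)) (c : ℝ) :
    Measurable (fun x : ℝ => if 0 < x then f x else c) := by
  apply measurable_of_isOpen
  intro s hs
  by_cases hc : c ∈ s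
  · have h : (fun x : ℝ => if 0 < x then f x else c) ⁻¹' s
        = (Set.Ioi 0 ∩ f ⁻¹' s) ∪ Set.Iic (0:ℝ) := by
      ext x
      by_cases hx : (0:ℝ) < x <;>
        simp [Set.mem_preimage, hx, hc, le_of_not_gt]
    rw [h]
    exact ((hf.isOpen_inter_preimage isOpen_Ioi hs).measurableSet).union measurableSet_Iic
  · have h : (fun x : ℝ => if 0 < x then f x else c) ⁻¹' s
        = (Set.Ioi 0 ∩ f ⁻¹' s) := by
      ext x
      by_cases hx : (0:ℝ) < x <;>
        simp [Set.mem_preimage, hx, hc]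
    rw [h]
    exact (hf.isOpen_inter_preimage isOpen_Ioi hs).measurableSet

@[simp] lemma erealPosPart_coe (r : ℝ) : erealPosPart (r : EReal) = ENNReal.ofReal r := by
  simp [erealPosPart]

lemma erealPosPart_mono : Monotone erealPosPart := by
  intro x y h
  induction x using EReal.rec with
  | bot =>
    have : erealPosPart ⊥ = 0 := by simp [erealPosPart]
    simp [this]
  | coe a =>
    induction y using EReal.rec with
    | bot => exact absurd h (by simp)
    | coe b =>
      simp only [erealPosPart_coe]
      exact ENNReal.ofReal_le_ofReal (EReal.coe_le_coe_iff.1 h)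
    | top => simp [erealPosPart]
  | top => rw [top_le_iff.1 h]

lemma lint_ofReal_ne_top'  {f : Ω → ℝ} (hf : Integrable f P) :
    ∫⁻ ω, ENNReal.ofReal (f ω) ∂P ≠ ⊤ := by
  have := (hasFiniteIntegral_iff_norm f).1 hf.hasFiniteIntegral
  refine ne_top_of_le_ne_top this.ne (lintegral_mono fun ω => ?_)
  exact ENNReal.ofReal_le_ofReal (le_abs_self _)

lemma integrable_of_lint_ofReal_ne_top {f : Ω → ℝ}
    (hm : AEStronglyMeasurable f P)
    (h1 : ∫⁻ ω, ENNReal.ofReal (f ω) ∂P ≠ ⊤)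
    (h2 : ∫⁻ ω, ENNReal.ofReal (-f ω) ∂P ≠ ⊤) : Integrable f P := by
  refine ⟨hm, ?_⟩
  rw [hasFiniteIntegral_iff_norm]
  have hle : ∀ ω, ENNReal.ofReal ‖f ω‖ ≤ ENNReal.ofReal (f ω) + ENNReal.ofReal (-f ω) := by
    intro ω
    rcases le_total 0 (f ω) with h | h
    · rw [Real.norm_eq_abs, abs_of_nonneg h]; exact le_self_add
    · rw [Real.norm_eq_abs, abs_of_nonpos h]; exact le_add_self
  refine lt_of_le_of_lt (lintegral_mono hle) ?_
  have hma : AEMeasurable (fun ω => ENNReal.ofReal (f ω)) P :=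
    ENNReal.measurable_ofReal.comp_aemeasurable hm.aemeasurable
  rw [lintegral_add_left' hma]
  exact ENNReal.add_lt_top.2 ⟨h1.lt_top, h2.lt_top⟩

lemma coe_ennreal_eq_toReal {a : ℝ≥0∞} (ha : a ≠ ⊤) : (a : EReal) = ((a.toReal : ℝ) : EReal) := by
  conv_lhs => rw [← ENNReal.ofReal_toReal ha]
  rw [EReal.coe_ennreal_ofReal, max_eq_left ENNReal.toReal_nonneg]

lemma lint_sub_eq_integral {f : Ω → ℝ} (hf : Integrable f P) :
    ((∫⁻ ω, ENNReal.ofReal (f ω) ∂P : ℝ≥0∞) : EReal)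
      - ((∫⁻ ω, ENNReal.ofReal (-f ω) ∂P : ℝ≥0∞) : EReal) = ((∫ ω, f ω ∂P : ℝ) : EReal) := by
  have h1 := lint_ofReal_ne_top' hf
  have h2 : ∫⁻ ω, ENNReal.ofReal (-f ω) ∂P ≠ ⊤ := by
    have := lint_ofReal_ne_top' hf.neg
    simpa using this
  rw [coe_ennreal_eq_toReal h1, coe_ennreal_eq_toReal h2, ← EReal.coe_sub,
    ← integral_eq_lintegral_pos_part_sub_lintegral_neg_part hf]

lemma le_eint {u : Ω → ℝ} (hu : Integrable u P) {v : Ω → EReal}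
    (hv : ∀ᵐ ω ∂P, ((u ω : ℝ) : EReal) ≤ v ω) :
    ((∫ ω, u ω ∂P : ℝ) : EReal) ≤
      ((∫⁻ ω, erealPosPart (v ω) ∂P : ℝ≥0∞) : EReal)
        - ((∫⁻ ω, erealPosPart (-(v ω)) ∂P : ℝ≥0∞) : EReal) := by
  have h1 : ∫⁻ ω, ENNReal.ofReal (u ω) ∂P ≤ ∫⁻ ω, erealPosPart (v ω) ∂P := by
    refine lintegral_mono_ae (hv.mono fun ω h => ?_)
    rw [← erealPosPart_coe]; exact erealPosPart_mono h
  have h2 : ∫⁻ ω, erealPosPart (-(v ω)) ∂P ≤ ∫⁻ ω, ENNReal.ofReal (-(u ω)) ∂P := by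
    refine lintegral_mono_ae (hv.mono fun ω h => ?_)
    rw [← erealPosPart_coe, EReal.coe_neg]
    exact erealPosPart_mono (EReal.neg_le_neg_iff.2 h)
  calc ((∫ ω, u ω ∂P : ℝ) : EReal)
      = ((∫⁻ ω, ENNReal.ofReal (u ω) ∂P : ℝ≥0∞) : EReal)
        - ((∫⁻ ω, ENNReal.ofReal (-(u ω)) ∂P : ℝ≥0∞) : EReal) := (lint_sub_eq_integral hu).symm
    _ ≤ _ := EReal.sub_le_sub (EReal.coe_ennreal_le_coe_ennreal_iff.2 h1)
        (EReal.coe_ennreal_le_coe_ennreal_iff.2 h2)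

lemma lint_ofReal_le_of_eint_le {u g : Ω → ℝ} (hu : Integrable u P)
    (hg : AEStronglyMeasurable g P) {v : Ω → EReal}
    (hv : ∀ᵐ ω ∂P, v ω = ((u ω + g ω : ℝ) : EReal))
    (hle : ((∫⁻ ω, erealPosPart (v ω) ∂P : ℝ≥0∞) : EReal)
        - ((∫⁻ ω, erealPosPart (-(v ω)) ∂P : ℝ≥0∞) : EReal) ≤ ((∫ ω, u ω ∂P : ℝ) : EReal)) :
    ∫⁻ ω, ENNReal.ofReal (g ω) ∂P ≤ ∫⁻ ω, ENNReal.ofReal (-g ω) ∂P := by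
  by_cases hb : ∫⁻ ω, ENNReal.ofReal (-g ω) ∂P = ⊤
  · exact hb ▸ le_top
  have e1 : ∫⁻ ω, erealPosPart (v ω) ∂P = ∫⁻ ω, ENNReal.ofReal (u ω + g ω) ∂P :=
    lintegral_congr_ae (hv.mono fun ω h => by simp only [h, erealPosPart_coe])
  have e2 : ∫⁻ ω, erealPosPart (-(v ω)) ∂P = ∫⁻ ω, ENNReal.ofReal (-(u ω + g ω)) ∂P :=
    lintegral_congr_ae (hv.mono fun ω h => by simp only [h, ← EReal.coe_neg, erealPosPart_coe])
  have hwm : AEStronglyMeasurable (fun ω => u ω + g ω) P := hu.aestronglyMeasurable.add hg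
  have hb2 : ∫⁻ ω, ENNReal.ofReal (-(u ω + g ω)) ∂P ≠ ⊤ := by
    have hle2 : ∀ ω, ENNReal.ofReal (-(u ω + g ω))
        ≤ ENNReal.ofReal (-u ω) + ENNReal.ofReal (-g ω) := by
      intro ω
      rw [neg_add]
      exact ENNReal.ofReal_add_le
    refine ne_top_of_le_ne_top ?_ (lintegral_mono hle2)
    have hma : AEMeasurable (fun ω => ENNReal.ofReal (-u ω)) P :=
      ENNReal.measurable_ofReal.comp_aemeasurable hu.neg.aemeasurable
    rw [lintegral_add_left' hma]
    have h2 : ∫⁻ ω, ENNReal.ofReal (-u ω) ∂P ≠ ⊤ := by simpa using lint_ofReal_ne_top' hu.neg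
    exact ENNReal.add_ne_top.2 ⟨h2, hb⟩
  by_cases ha : ∫⁻ ω, ENNReal.ofReal (u ω + g ω) ∂P = ⊤
  · exfalso
    rw [e1, e2, ha, coe_ennreal_eq_toReal hb2, EReal.coe_ennreal_top, EReal.top_sub_coe] at hle
    exact absurd hle (by simp)
  · have hw : Integrable (fun ω => u ω + g ω) P :=
      integrable_of_lint_ofReal_ne_top hwm ha hb2
    rw [e1, e2, lint_sub_eq_integral hw, EReal.coe_le_coe_iff] at hle
    have hgi : Integrable g P := by
      refine (hw.sub hu).congr (Eventually.of_forall fun ω => ?_)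
      simp
    have hig : ∫ ω, g ω ∂P ≤ 0 := by
      rw [integral_add hu hgi] at hle; linarith
    rw [integral_eq_lintegral_pos_part_sub_lintegral_neg_part hgi, sub_nonpos] at hig
    have hgl := lint_ofReal_ne_top' hgi
    exact (ENNReal.toReal_le_toReal hgl hb).1 hig

end helpers

set_option maxHeartbeats 2000000 in
/-- Let `U : (0,∞) → ℝ` be continuously differentiable, strictly
increasing and strictly concave, with `U'(0+) = +∞`, `U'(∞) = 0` and
`limsup_{x→∞} x U'(x)/U(x) < 1`; extend `U` to `0` by `U(0) = lim_{x↓0} U(x) ∈ [−∞, ∞)`.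
Let `D` be a convex set of nonnegative random variables with well-defined expected
utilities and let `V* ∈ D` satisfy `E[U(V*)] = sup_{W ∈ D} E[U(W)] < ∞`. Then for every
`α > 0` and every `W ∈ D` with `W ≥ α` a.s.: `V* > 0` a.s., `(W − V*)⁻ U'(V*)` is
integrable, and `E[(W − V*)⁺ U'(V*)] ≤ E[(W − V*)⁻ U'(V*)]`,
i.e. `E[(W − V*) U'(V*)] ≤ 0`. -/
theorem first_order_condition_at_optimum
    {Ω : Type*} [MeasurableSpace Ω] (P : Measure Ω) [IsProbabilityMeasure P]
    (U U' : ℝ → ℝ) (U₀ : EReal)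
    (hderiv : ∀ x ∈ Set.Ioi (0 : ℝ), HasDerivAt U (U' x) x)
    (hU'cont : ContinuousOn U' (Set.Ioi 0))
    (hmono : StrictMonoOn U (Set.Ioi 0))
    (hconc : StrictConcaveOn ℝ (Set.Ioi 0) U)
    (hInada₀ : Tendsto U' (nhdsWithin 0 (Set.Ioi 0)) atTop)
    (hInadaTop : Tendsto U' atTop (nhds 0))
    (hRAE : Filter.limsup (fun x : ℝ => x * U' x / U x) atTop < 1)
    (hU₀ : Tendsto (fun x : ℝ => (U x : EReal)) (nhdsWithin 0 (Set.Ioi 0)) (nhds U₀))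
    (hU₀ne : U₀ ≠ ⊤)
    (D : Set (Ω → ℝ)) (hD : Convex ℝ D)
    (hDmeas : ∀ W ∈ D, Measurable W) (hDnonneg : ∀ W ∈ D, ∀ ω, 0 ≤ W ω)
    (hDwd : ∀ W ∈ D, ExpUtilWellDef P U U₀ W)
    (Vstar : Ω → ℝ) (hVD : Vstar ∈ D)
    (hopt : expUtil P U U₀ Vstar = ⨆ W ∈ D, expUtil P U U₀ W)
    (hfin : expUtil P U U₀ Vstar ≠ ⊤) :
    ∀ α : ℝ, 0 < α → ∀ W ∈ D, (∀ᵐ ω ∂P, α ≤ W ω) →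
      (∀ᵐ ω ∂P, 0 < Vstar ω) ∧
      Integrable (fun ω => max (Vstar ω - W ω) 0 * U' (Vstar ω)) P ∧
      ∫⁻ ω, ENNReal.ofReal (max (W ω - Vstar ω) 0 * U' (Vstar ω)) ∂P
        ≤ ∫⁻ ω, ENNReal.ofReal (max (Vstar ω - W ω) 0 * U' (Vstar ω)) ∂P := by
  intro α hα W hW hWα
  have hVmeas : Measurable Vstar := hDmeas _ hVD
  have hWmeas : Measurable W := hDmeas _ hW
  have hVnn : ∀ ω, 0 ≤ Vstar ω := hDnonneg _ hVD
  have hWnn : ∀ ω, 0 ≤ W ω := hDnonneg _ hW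
  have hUcont : ContinuousOn U (Set.Ioi 0) := fun x hx =>
    (hderiv x hx).continuousAt.continuousWithinAt
  have hconc' : ConcaveOn ℝ (Set.Ioi 0) U := hconc.concaveOn
  have hUmono : ∀ {x y : ℝ}, 0 < x → x ≤ y → U x ≤ U y := fun {x y} hx hxy =>
    hmono.monotoneOn hx (lt_of_lt_of_le hx hxy) hxy
  -- tangent line inequality for the concave function U
  have tangent : ∀ x y : ℝ, 0 < x → 0 < y → U y - U x ≤ U' x * (y - x) := by
    intro x y hx hy
    rcases lt_trichotomy x y with h | rfl | h
    · have hs := hconc'.slope_le_of_hasDerivAt hx hy h (hderiv x hx)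
      rw [slope_def_field] at hs
      have h' := (div_le_iff₀ (by linarith : (0:ℝ) < y - x)).1 hs
      linarith
    · simp
    · have hs := hconc'.le_slope_of_hasDerivAt hy hx h (hderiv x hx)
      rw [slope_def_field] at hs
      have h' := (le_div_iff₀ (by linarith : (0:ℝ) < x - y)).1 hs
      nlinarith
  have hU'pos : ∀ x : ℝ, 0 < x → 0 < U' x := by
    intro x hx
    have h1 := tangent x (2*x) hx (by linarith)
    have h2 : U x < U (2*x) := hmono (Set.mem_Ioi.2 hx) (Set.mem_Ioi.2 (by linarith)) (by linarith)
    nlinarith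
  have hU'anti : ∀ x y : ℝ, 0 < x → x ≤ y → U' y ≤ U' x := by
    intro x y hx hxy
    rcases eq_or_lt_of_le hxy with rfl | h
    · exact le_refl _
    · have hy : 0 < y := lt_trans hx h
      have t1 := tangent x y hx hy
      have t2 := tangent y x hy hx
      nlinarith
  -- optimality comparison
  have hle : ∀ X ∈ D, expUtil P U U₀ X ≤ expUtil P U U₀ Vstar := by
    intro X hX
    rw [hopt]
    exact le_iSup₂ (f := fun X (_ : X ∈ D) => expUtil P U U₀ X) X hX
  -- `expUtil` spelled as lintegrals
  have expUtil_def : ∀ X : Ω → ℝ, expUtil P U U₀ X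
      = ((∫⁻ ω, erealPosPart (utilAt U U₀ (X ω)) ∂P : ℝ≥0∞) : EReal)
        - ((∫⁻ ω, erealPosPart (-(utilAt U U₀ (X ω))) ∂P : ℝ≥0∞) : EReal) := fun X => rfl
  have hWlow : ((U α : ℝ) : EReal) ≤ expUtil P U U₀ W := by
    rw [expUtil_def]
    have hv : ∀ᵐ ω ∂P, (((fun _ : Ω => U α) ω : ℝ) : EReal) ≤ utilAt U U₀ (W ω) := by
      filter_upwards [hWα] with ω hω
      have hWpos : 0 < W ω := lt_of_lt_of_le hα hω
      simp only [utilAt, if_neg (ne_of_gt hWpos)]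
      exact EReal.coe_le_coe_iff.2 (hUmono hα hω)
    have h := le_eint (integrable_const (U α)) hv
    rwa [integral_const, probReal_univ, one_smul] at h
  have hVlow : ((U α : ℝ) : EReal) ≤ expUtil P U U₀ Vstar := hWlow.trans (hle W hW)
  have hIn_ne : (∫⁻ ω, erealPosPart (-(utilAt U U₀ (Vstar ω))) ∂P) ≠ ⊤ := by
    intro h
    rw [expUtil_def, h, EReal.coe_ennreal_top, EReal.sub_top] at hVlow
    exact absurd hVlow (by simp)
  have hIp_ne : (∫⁻ ω, erealPosPart (utilAt U U₀ (Vstar ω)) ∂P) ≠ ⊤ := by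
    intro h
    apply hfin
    rw [expUtil_def, h, EReal.coe_ennreal_top, coe_ennreal_eq_toReal hIn_ne, EReal.top_sub_coe]
  have hex : ∀ x : EReal, x ≠ ⊥ → x ≠ ⊤ → ∃ r : ℝ, x = (r : EReal) := by
    intro x
    induction x using EReal.rec with
    | bot => exact fun h _ => absurd rfl h
    | coe r => exact fun _ _ => ⟨r, rfl⟩
    | top => exact fun _ h => absurd rfl h
  have hAmeas : MeasurableSet {ω | Vstar ω = 0} := hVmeas (measurableSet_singleton 0)
  have hA : P {ω | Vstar ω = 0} = 0 := by
    by_contra hPA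
    have hbotcase : U₀ ≠ ⊥ := by
      intro hbot
      apply hIn_ne
      refine top_le_iff.1 ?_
      have hind : ∀ ω, {ω' | Vstar ω' = 0}.indicator (fun _ => (⊤ : ℝ≥0∞)) ω
          ≤ erealPosPart (-(utilAt U U₀ (Vstar ω))) := by
        intro ω
        rcases eq_or_ne (Vstar ω) 0 with h0 | h0
        · have hu : utilAt U U₀ (Vstar ω) = ⊥ := by rw [utilAt, if_pos h0, hbot]
          have hmem : ω ∈ {ω' | Vstar ω' = 0} := h0
          rw [Set.indicator_of_mem hmem, hu]
          simp [erealPosPart]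
        · have hmem : ω ∉ {ω' | Vstar ω' = 0} := h0
          rw [Set.indicator_of_notMem hmem]
          exact zero_le
      calc (⊤ : ℝ≥0∞) = ⊤ * P {ω | Vstar ω = 0} := (ENNReal.top_mul hPA).symm
        _ = ∫⁻ ω, {ω' | Vstar ω' = 0}.indicator (fun _ => (⊤ : ℝ≥0∞)) ω ∂P :=
            (lintegral_indicator_const hAmeas ⊤).symm
        _ ≤ _ := lintegral_mono hind
    obtain ⟨u₀, hu₀eq⟩ := hex U₀ hbotcase hU₀ne
    have hU₀r : Tendsto U (𝓝[>] (0 : ℝ)) (𝓝 u₀) := by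
      rw [← EReal.tendsto_coe]
      exact hu₀eq ▸ hU₀
    have F1 : ∀ x : ℝ, 0 < x → u₀ ≤ U x := by
      intro x hx
      refine le_of_tendsto hU₀r ?_
      filter_upwards [Ioo_mem_nhdsGT_of_mem (Set.left_mem_Ico.2 hx)] with y hy
      exact hUmono hy.1 hy.2.le
    have F5 : ∀ y : ℝ, 0 < y → y * U' y ≤ U y - u₀ := by
      intro y hy
      have hlim1 : Tendsto (fun x : ℝ => U y - U x) (𝓝[>] (0:ℝ)) (𝓝 (U y - u₀)) :=
        tendsto_const_nhds.sub hU₀r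
      have hid : Tendsto (fun x : ℝ => x) (𝓝[>] (0:ℝ)) (𝓝 0) :=
        tendsto_id.mono_left nhdsWithin_le_nhds
      have hlim2 : Tendsto (fun x : ℝ => U' y * (y - x)) (𝓝[>] (0:ℝ)) (𝓝 (U' y * (y - 0))) :=
        tendsto_const_nhds.mul (tendsto_const_nhds.sub hid)
      have hev : ∀ᶠ x in 𝓝[>] (0:ℝ), U' y * (y - x) ≤ U y - U x := by
        filter_upwards [self_mem_nhdsWithin] with x hx
        have := tangent y x hy hx
        linarith
      have hfin2 := le_of_tendsto_of_tendsto hlim2 hlim1 hev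
      rw [sub_zero, mul_comm] at hfin2
      exact hfin2
    set u : Ω → ℝ := fun ω => if 0 < Vstar ω then U (Vstar ω) else u₀ with hu_def
    have hu_meas : Measurable u := (measurable_if_pos hUcont u₀).comp hVmeas
    have hu_eq : ∀ ω, utilAt U U₀ (Vstar ω) = ((u ω : ℝ) : EReal) := by
      intro ω
      rcases eq_or_lt_of_le (hVnn ω) with h0 | h0
      · have h0' : Vstar ω = 0 := h0.symm
        simp [hu_def, utilAt, h0', hu₀eq]
      · simp only [hu_def, utilAt, if_neg (ne_of_gt h0), if_pos h0]
    have hIp' : (∫⁻ ω, erealPosPart (utilAt U U₀ (Vstar ω)) ∂P)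
        = ∫⁻ ω, ENNReal.ofReal (u ω) ∂P := by
      refine lintegral_congr fun ω => ?_
      rw [hu_eq ω, erealPosPart_coe]
    have hIn' : (∫⁻ ω, erealPosPart (-(utilAt U U₀ (Vstar ω))) ∂P)
        = ∫⁻ ω, ENNReal.ofReal (-u ω) ∂P := by
      refine lintegral_congr fun ω => ?_
      rw [hu_eq ω, ← EReal.coe_neg, erealPosPart_coe]
    have hu_int : Integrable u P :=
      integrable_of_lint_ofReal_ne_top hu_meas.aestronglyMeasurable
        (hIp' ▸ hIp_ne) (hIn' ▸ hIn_ne)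
    have hVr : expUtil P U U₀ Vstar = ((∫ ω, u ω ∂P : ℝ) : EReal) := by
      rw [expUtil_def, hIp', hIn']
      exact lint_sub_eq_integral hu_int
    set φ : Ω → ℝ := fun ω => 4 * max (u ω) 0 + 4 * |u₀| with hφ_def
    have hφ_int : Integrable φ P := (hu_int.pos_part.const_mul 4).add (integrable_const _)
    have hφ_nn : ∀ ω, 0 ≤ φ ω := fun ω =>
      add_nonneg (mul_nonneg (by norm_num) (le_max_right _ _))
        (mul_nonneg (by norm_num) (abs_nonneg _))
    set K : ℝ := ∫ ω, φ ω ∂P with hK_def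
    have hxU' : ∀ x : ℝ, 0 < x → x * U' (x/2) ≤ 4 * max (U x) 0 + 4 * |u₀| := by
      intro x hx
      have ht := tangent (x/2) (x/4) (by linarith) (by linarith)
      have h2 : U (x/2) ≤ U x := hUmono (by linarith) (by linarith)
      have h3 : u₀ ≤ U (x/4) := F1 _ (by linarith)
      have h4 : U x ≤ max (U x) 0 := le_max_left _ _
      have h5 : -|u₀| ≤ u₀ := neg_abs_le u₀
      nlinarith
    have hMain : ∀ ε : ℝ, 0 < ε → ε ≤ 1/2 →
        (U (ε*α) - u₀) * (P {ω | Vstar ω = 0}).toReal ≤ ε * K := by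
      intro ε hε hε2
      set Vε : Ω → ℝ := fun ω => (1-ε) * Vstar ω + ε * W ω with hVε_def
      have hVεD : Vε ∈ D := by
        have h := hD hVD hW (by linarith : (0:ℝ) ≤ 1 - ε) (le_of_lt hε) (by ring)
        have heq : (1-ε) • Vstar + ε • W = Vε := by
          funext ω
          simp [hVε_def]
        rwa [heq] at h
      set d : ℝ := U (ε*α) - u₀ with hd_def
      set f1 : Ω → ℝ := {ω' | Vstar ω' = 0}.indicator (fun _ => d) with hf1_def
      set f2 : Ω → ℝ := {ω' | Vstar ω' = 0}ᶜ.indicator (fun ω' => -(ε * φ ω')) with hf2_def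
      have hf1_int : Integrable f1 P := (integrable_const d).indicator hAmeas
      have hf2_int : Integrable f2 P := ((hφ_int.const_mul ε).neg).indicator hAmeas.compl
      have hf12_int : Integrable (fun ω => f1 ω + f2 ω) P := hf1_int.add hf2_int
      have hsum_int : Integrable (fun ω => u ω + (f1 ω + f2 ω)) P := hu_int.add hf12_int
      have hv : ∀ᵐ ω ∂P,
          (((fun ω' => u ω' + (f1 ω' + f2 ω')) ω : ℝ) : EReal) ≤ utilAt U U₀ (Vε ω) := by
        filter_upwards [hWα] with ω hω
        have hWpos : 0 < W ω := lt_of_lt_of_le hα hω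
        rcases eq_or_lt_of_le (hVnn ω) with h0 | h0
        · have h0' : Vstar ω = 0 := h0.symm
          have hmem : ω ∈ {ω' | Vstar ω' = 0} := h0'
          have hVε_pos : 0 < Vε ω := by
            have : Vε ω = (1-ε) * Vstar ω + ε * W ω := rfl
            rw [this, h0']
            nlinarith
          rw [utilAt, if_neg (ne_of_gt hVε_pos)]
          refine EReal.coe_le_coe_iff.2 ?_
          have h1 : u ω = u₀ := by simp [hu_def, h0']
          have h2 : f1 ω = d := by rw [hf1_def, Set.indicator_of_mem hmem]
          have h3 : f2 ω = 0 := by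
            rw [hf2_def, Set.indicator_of_notMem (Set.notMem_compl_iff.2 hmem)]
          have h4 : ε * α ≤ Vε ω := by
            have hrfl : Vε ω = (1-ε) * Vstar ω + ε * W ω := rfl
            rw [hrfl, h0']
            nlinarith [mul_le_mul_of_nonneg_left hω hε.le]
          have h5 := hUmono (by positivity : (0:ℝ) < ε*α) h4
          rw [h1, h2, h3, hd_def]
          linarith
        · have hVε_pos : 0 < Vε ω := by
            have hrfl : Vε ω = (1-ε) * Vstar ω + ε * W ω := rfl
            rw [hrfl]
            nlinarith
          rw [utilAt, if_neg (ne_of_gt hVε_pos)]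
          refine EReal.coe_le_coe_iff.2 ?_
          have h1 : u ω = U (Vstar ω) := by simp [hu_def, h0]
          have hnmem : ω ∉ {ω' | Vstar ω' = 0} := by
            simp only [Set.mem_setOf_eq]
            exact ne_of_gt h0
          have h2 : f1 ω = 0 := by rw [hf1_def, Set.indicator_of_notMem hnmem]
          have h3 : f2 ω = -(ε * φ ω) := by
            rw [hf2_def, Set.indicator_of_mem (Set.mem_compl hnmem)]
          have key : U (Vstar ω) - U (Vε ω) ≤ ε * φ ω := by
            rcases le_or_gt (Vstar ω) (W ω) with hVW | hVW
            · have hVle : Vstar ω ≤ Vε ω := by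
                have hrfl : Vε ω = (1-ε) * Vstar ω + ε * W ω := rfl
                rw [hrfl]
                nlinarith [mul_le_mul_of_nonneg_left hVW hε.le]
              have hm := hUmono h0 hVle
              have hnn := mul_nonneg (le_of_lt hε) (hφ_nn ω)
              linarith
            · have hVε_geV2 : Vstar ω / 2 ≤ Vε ω := by
                have hrfl : Vε ω = (1-ε) * Vstar ω + ε * W ω := rfl
                rw [hrfl]
                nlinarith [mul_nonneg hε.le (le_of_lt hWpos)]
              have ht := tangent (Vε ω) (Vstar ω) hVε_pos h0
              have hU'le : U' (Vε ω) ≤ U' (Vstar ω / 2) :=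
                hU'anti _ _ (by linarith) hVε_geV2
              have hU'nn : 0 ≤ U' (Vε ω) := le_of_lt (hU'pos _ hVε_pos)
              have hq := hxU' (Vstar ω) h0
              have hVmVε : Vstar ω - Vε ω = ε * (Vstar ω - W ω) := by
                have hrfl : Vε ω = (1-ε) * Vstar ω + ε * W ω := rfl
                rw [hrfl]
                ring
              have hφω : φ ω = 4 * max (U (Vstar ω)) 0 + 4 * |u₀| := by
                simp only [hφ_def, h1]
              have hU'V2nn : 0 ≤ U' (Vstar ω / 2) := le_of_lt (hU'pos _ (by linarith))
              have hVW0 : (0:ℝ) ≤ Vstar ω - W ω := le_of_lt (sub_pos.2 hVW)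
              have c1 : U' (Vε ω) * (Vstar ω - W ω) ≤ U' (Vstar ω / 2) * (Vstar ω - W ω) :=
                mul_le_mul_of_nonneg_right hU'le hVW0
              have c2 : U' (Vstar ω / 2) * (Vstar ω - W ω) ≤ U' (Vstar ω / 2) * Vstar ω :=
                mul_le_mul_of_nonneg_left (by linarith) hU'V2nn
              have c3 : U' (Vε ω) * (Vstar ω - Vε ω) = ε * (U' (Vε ω) * (Vstar ω - W ω)) := by
                rw [hVmVε]; ring
              have c4 : ε * (U' (Vε ω) * (Vstar ω - W ω)) ≤ ε * (Vstar ω * U' (Vstar ω / 2)) := by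
                apply mul_le_mul_of_nonneg_left _ hε.le
                calc U' (Vε ω) * (Vstar ω - W ω) ≤ U' (Vstar ω / 2) * Vstar ω := c1.trans c2
                  _ = Vstar ω * U' (Vstar ω / 2) := mul_comm _ _
              have c5 : ε * (Vstar ω * U' (Vstar ω / 2)) ≤ ε * φ ω := by
                apply mul_le_mul_of_nonneg_left _ hε.le
                rw [hφω]; exact hq
              exact (ht.trans_eq c3).trans (c4.trans c5)
          rw [h1, h2, h3]
          linarith
      have hkey := le_eint hsum_int hv
      have hVεle : expUtil P U U₀ Vε ≤ ((∫ ω, u ω ∂P : ℝ) : EReal) := hVr ▸ hle Vε hVεD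
      rw [expUtil_def] at hVεle
      have hint_le : ∫ ω, (u ω + (f1 ω + f2 ω)) ∂P ≤ ∫ ω, u ω ∂P :=
        EReal.coe_le_coe_iff.1 (le_trans hkey hVεle)
      rw [integral_add hu_int hf12_int, integral_add hf1_int hf2_int] at hint_le
      have hI1 : ∫ ω, f1 ω ∂P = (P {ω | Vstar ω = 0}).toReal * d := by
        rw [hf1_def]
        rw [integral_indicator_const d hAmeas, smul_eq_mul]
        rfl
      have hsub : ∫ ω in {ω' | Vstar ω' = 0}ᶜ, ε * φ ω ∂P ≤ ε * K := by
        have h1 : ∫ ω in {ω' | Vstar ω' = 0}ᶜ, ε * φ ω ∂P ≤ ∫ ω, ε * φ ω ∂P :=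
          setIntegral_le_integral (hφ_int.const_mul ε)
            (Eventually.of_forall fun ω => mul_nonneg hε.le (hφ_nn ω))
        simp only [integral_const_mul] at h1
        rw [hK_def, integral_const_mul]
        exact h1
      have hI2 : ∫ ω, f2 ω ∂P = -∫ ω in {ω' | Vstar ω' = 0}ᶜ, ε * φ ω ∂P := by
        rw [hf2_def, integral_indicator hAmeas.compl, integral_neg]
      have hp'nn : (0:ℝ) ≤ (P {ω | Vstar ω = 0}).toReal := ENNReal.toReal_nonneg
      rw [hI1, hI2] at hint_le
      rw [hd_def] at hint_le
      nlinarith [hint_le, hsub]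
    have hp' : 0 < (P {ω | Vstar ω = 0}).toReal :=
      ENNReal.toReal_pos hPA (measure_ne_top P _)
    set p' := (P {ω | Vstar ω = 0}).toReal with hp'_def
    have hev : ∀ᶠ x in 𝓝[>] (0:ℝ), K / (α * p') < U' x :=
      hInada₀.eventually (eventually_gt_atTop _)
    have hev2 : Ioo (0:ℝ) (α/2) ∈ 𝓝[>] (0:ℝ) :=
      Ioo_mem_nhdsGT_of_mem (Set.left_mem_Ico.2 (by linarith))
    obtain ⟨x, hx1, hx2⟩ := (hev.and (eventually_of_mem hev2 fun x hx => hx)).exists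
    set ε := x / α with hε_def
    have hε1 : 0 < ε := div_pos hx2.1 hα
    have hε2 : ε ≤ 1/2 := by
      rw [hε_def, div_le_iff₀ hα]
      have := hx2.2
      linarith
    have hεα : ε * α = x := div_mul_cancel₀ x (ne_of_gt hα)
    have h1 := hMain ε hε1 hε2
    rw [hεα] at h1
    have h2 := F5 x hx2.1
    have h3 : U' x ≤ K / (α * p') := by
      rw [le_div_iff₀ (by positivity)]
      have h4 : x * U' x * p' ≤ (U x - u₀) * p' :=
        mul_le_mul_of_nonneg_right h2 hp'.le
      have h5 : ε * K = x * K / α := by rw [hε_def]; ring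
      rw [h5] at h1
      have h6 : x * (U' x * (α * p')) ≤ x * K := by
        have : x * U' x * p' * α ≤ (x * K / α) * α := by
          apply mul_le_mul_of_nonneg_right _ hα.le
          linarith
        rw [div_mul_cancel₀ _ (ne_of_gt hα)] at this
        nlinarith
      exact le_of_mul_le_mul_left h6 hx2.1
    exact absurd h3 (not_le.2 hx1)
  have hVpos : ∀ᵐ ω ∂P, 0 < Vstar ω := by
    rw [ae_iff]
    have hset : {ω | ¬ 0 < Vstar ω} = {ω | Vstar ω = 0} := by
      ext ω
      simp only [Set.mem_setOf_eq, not_lt]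
      exact ⟨fun h => le_antisymm h (hVnn ω), fun h => le_of_eq h⟩
    rw [hset]
    exact hA
  -- measurable real versions of U∘V and U'
  set Uz : ℝ → ℝ := fun x => if 0 < x then U x else 0 with hUz_def
  have hUz_meas : Measurable Uz := measurable_if_pos hUcont 0
  set u : Ω → ℝ := fun ω => Uz (Vstar ω) with hu_def
  have hu_meas : Measurable u := hUz_meas.comp hVmeas
  have hu_ae : ∀ᵐ ω ∂P, utilAt U U₀ (Vstar ω) = ((u ω : ℝ) : EReal) := by
    filter_upwards [hVpos] with ω h0
    simp only [hu_def, hUz_def, utilAt, if_neg (ne_of_gt h0), if_pos h0]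
  have hIp' : (∫⁻ ω, erealPosPart (utilAt U U₀ (Vstar ω)) ∂P)
      = ∫⁻ ω, ENNReal.ofReal (u ω) ∂P :=
    lintegral_congr_ae (hu_ae.mono fun ω h => by simp only [h, erealPosPart_coe])
  have hIn' : (∫⁻ ω, erealPosPart (-(utilAt U U₀ (Vstar ω))) ∂P)
      = ∫⁻ ω, ENNReal.ofReal (-u ω) ∂P :=
    lintegral_congr_ae (hu_ae.mono fun ω h =>
      by simp only [h, ← EReal.coe_neg, erealPosPart_coe])
  have hu_int : Integrable u P :=
    integrable_of_lint_ofReal_ne_top hu_meas.aestronglyMeasurable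
      (hIp' ▸ hIp_ne) (hIn' ▸ hIn_ne)
  have hVr : expUtil P U U₀ Vstar = ((∫ ω, u ω ∂P : ℝ) : EReal) := by
    rw [expUtil_def, hIp', hIn']
    exact lint_sub_eq_integral hu_int
  set U'z : ℝ → ℝ := fun x => if 0 < x then U' x else 0 with hU'z_def
  have hU'z_meas : Measurable U'z := measurable_if_pos hU'cont 0
  set φ : Ω → ℝ := fun ω => 4 * max (u ω) 0 + 4 * |U (α/4)| with hφ_def
  have hφ_int : Integrable φ P := (hu_int.pos_part.const_mul 4).add (integrable_const _)
  have hφ_nn : ∀ ω, 0 ≤ φ ω := fun ω =>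
    add_nonneg (mul_nonneg (by norm_num) (le_max_right _ _))
      (mul_nonneg (by norm_num) (abs_nonneg _))
  have hxU' : ∀ x : ℝ, α < x → x * U' (x/2) ≤ 4 * max (U x) 0 + 4 * |U (α/4)| := by
    intro x hx
    have hx0 : 0 < x := lt_trans hα hx
    have ht := tangent (x/2) (x/4) (by linarith) (by linarith)
    have h2 : U (x/2) ≤ U x := hUmono (by linarith) (by linarith)
    have h3 : U (α/4) ≤ U (x/4) := hUmono (by linarith) (by linarith)
    have h4 : U x ≤ max (U x) 0 := le_max_left _ _
    have h5 : -|U (α/4)| ≤ U (α/4) := neg_abs_le _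
    nlinarith
  -- Conclusion 2 : integrability of (V*-W)⁺ U'(V*)
  have hprod_eq : (fun ω => max (Vstar ω - W ω) 0 * U' (Vstar ω))
      = fun ω => max (Vstar ω - W ω) 0 * U'z (Vstar ω) := by
    funext ω
    rcases eq_or_lt_of_le (hVnn ω) with h0 | h0
    · have h0' : Vstar ω = 0 := h0.symm
      have hm : max (Vstar ω - W ω) 0 = 0 := max_eq_right (by rw [h0']; linarith [hWnn ω])
      rw [hm, zero_mul, zero_mul]
    · have : U'z (Vstar ω) = U' (Vstar ω) := by simp [hU'z_def, if_pos h0]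
      rw [this]
  have hg2_meas : Measurable (fun ω => max (Vstar ω - W ω) 0 * U'z (Vstar ω)) :=
    ((hVmeas.sub hWmeas).max measurable_const).mul (hU'z_meas.comp hVmeas)
  have h_dom : ∀ᵐ ω ∂P, ‖max (Vstar ω - W ω) 0 * U' (Vstar ω)‖ ≤ φ ω := by
    filter_upwards [hVpos, hWα] with ω h0 hω
    rcases le_or_gt (Vstar ω) (W ω) with hVW | hVW
    · have hm : max (Vstar ω - W ω) 0 = 0 := max_eq_right (by linarith)
      rw [hm, zero_mul, norm_zero]
      exact hφ_nn ω
    · have hVα : α < Vstar ω := lt_of_le_of_lt hω hVW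
      have hU'nn : 0 ≤ U' (Vstar ω) := (hU'pos _ h0).le
      have hmax : max (Vstar ω - W ω) 0 = Vstar ω - W ω := max_eq_left (by linarith)
      have hval : 0 ≤ max (Vstar ω - W ω) 0 * U' (Vstar ω) :=
        mul_nonneg (le_max_right _ _) hU'nn
      rw [Real.norm_eq_abs, abs_of_nonneg hval, hmax]
      have hU'le : U' (Vstar ω) ≤ U' (Vstar ω / 2) := hU'anti _ _ (by linarith) (by linarith)
      have hq := hxU' (Vstar ω) hVα
      have hu_ω : u ω = U (Vstar ω) := by simp [hu_def, hUz_def, if_pos h0]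
      have hφω : φ ω = 4 * max (U (Vstar ω)) 0 + 4 * |U (α/4)| := by
        simp only [hφ_def, hu_ω]
      have c1 : (Vstar ω - W ω) * U' (Vstar ω) ≤ Vstar ω * U' (Vstar ω) :=
        mul_le_mul_of_nonneg_right (by linarith [hWnn ω]) hU'nn
      have c2 : Vstar ω * U' (Vstar ω) ≤ Vstar ω * U' (Vstar ω / 2) :=
        mul_le_mul_of_nonneg_left hU'le (by linarith)
      rw [hφω]
      linarith
  have hInt2 : Integrable (fun ω => max (Vstar ω - W ω) 0 * U' (Vstar ω)) P := by
    rw [hprod_eq]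
    refine Integrable.mono' hφ_int hg2_meas.aestronglyMeasurable ?_
    filter_upwards [h_dom] with ω hd
    have heqω : max (Vstar ω - W ω) 0 * U'z (Vstar ω)
        = max (Vstar ω - W ω) 0 * U' (Vstar ω) := (congrFun hprod_eq ω).symm
    rw [heqω]
    exact hd
  refine ⟨hVpos, hInt2, ?_⟩
  -- Conclusion 3
  set εs : ℕ → ℝ := fun n => ((n:ℝ)+2)⁻¹ with hεs_def
  have hεs_pos : ∀ n, 0 < εs n := fun n => by positivity
  have hεs_le : ∀ n, εs n ≤ 1/2 := by
    intro n
    rw [hεs_def]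
    rw [show (1:ℝ)/2 = (2:ℝ)⁻¹ by norm_num]
    refine inv_anti₀ (by norm_num) ?_
    have : (0:ℝ) ≤ (n:ℝ) := Nat.cast_nonneg n
    linarith
  have hεs_lim : Tendsto εs atTop (𝓝 0) :=
    tendsto_inv_atTop_zero.comp (tendsto_atTop_add_const_right _ 2 tendsto_natCast_atTop_atTop)
  set Vn : ℕ → Ω → ℝ := fun n ω => (1 - εs n) * Vstar ω + εs n * W ω with hVn_def
  have hVnD : ∀ n, Vn n ∈ D := by
    intro n
    have h := hD hVD hW (by linarith [hεs_le n] : (0:ℝ) ≤ 1 - εs n) (hεs_pos n).le (by ring)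
    have heq : (1 - εs n) • Vstar + εs n • W = Vn n := by
      funext ω
      simp [hVn_def]
    rwa [heq] at h
  have hVn_meas : ∀ n, Measurable (Vn n) := fun n =>
    (measurable_const.mul hVmeas).add (measurable_const.mul hWmeas)
  have hVn_posae : ∀ n, ∀ᵐ ω ∂P, 0 < Vn n ω := by
    intro n
    filter_upwards [hVpos, hWα] with ω h0 hω
    have h1 := hεs_pos n
    have h2 := hεs_le n
    have hrfl : Vn n ω = (1 - εs n) * Vstar ω + εs n * W ω := rfl
    rw [hrfl]
    nlinarith
  set q : ℕ → Ω → ℝ := fun n ω => (Uz (Vn n ω) - u ω) / εs n with hq_def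
  have hq_meas : ∀ n, Measurable (q n) := fun n =>
    ((hUz_meas.comp (hVn_meas n)).sub hu_meas).div_const _
  -- per-n first-order inequality
  have hq_le : ∀ n, ∫⁻ ω, ENNReal.ofReal (q n ω) ∂P ≤ ∫⁻ ω, ENNReal.ofReal (-q n ω) ∂P := by
    intro n
    have hg_meas' : AEStronglyMeasurable (fun ω => Uz (Vn n ω) - u ω) P :=
      ((hUz_meas.comp (hVn_meas n)).sub hu_meas).aestronglyMeasurable
    have hv : ∀ᵐ ω ∂P, utilAt U U₀ (Vn n ω)
        = ((u ω + (Uz (Vn n ω) - u ω) : ℝ) : EReal) := by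
      filter_upwards [hVn_posae n] with ω hpos
      rw [utilAt, if_neg (ne_of_gt hpos)]
      have h1 : u ω + (Uz (Vn n ω) - u ω) = Uz (Vn n ω) := by ring
      rw [h1]
      have h2 : Uz (Vn n ω) = U (Vn n ω) := by simp [hUz_def, if_pos hpos]
      rw [h2]
    have hEle : ((∫⁻ ω, erealPosPart (utilAt U U₀ (Vn n ω)) ∂P : ℝ≥0∞) : EReal)
        - ((∫⁻ ω, erealPosPart (-(utilAt U U₀ (Vn n ω))) ∂P : ℝ≥0∞) : EReal)
        ≤ ((∫ ω, u ω ∂P : ℝ) : EReal) := by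
      have h := hle (Vn n) (hVnD n)
      rw [expUtil_def] at h
      exact h.trans (le_of_eq hVr)
    have hg_le := lint_ofReal_le_of_eint_le hu_int hg_meas' hv hEle
    have hpos : (0:ℝ) ≤ (εs n)⁻¹ := (inv_pos.2 (hεs_pos n)).le
    have e1 : ∀ ω, ENNReal.ofReal (q n ω)
        = ENNReal.ofReal (Uz (Vn n ω) - u ω) * ENNReal.ofReal (εs n)⁻¹ := by
      intro ω
      have : q n ω = (Uz (Vn n ω) - u ω) * (εs n)⁻¹ := by
        rw [hq_def]
        ring
      rw [this, ENNReal.ofReal_mul' hpos]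
    have e2 : ∀ ω, ENNReal.ofReal (-q n ω)
        = ENNReal.ofReal (-(Uz (Vn n ω) - u ω)) * ENNReal.ofReal (εs n)⁻¹ := by
      intro ω
      have : -q n ω = (-(Uz (Vn n ω) - u ω)) * (εs n)⁻¹ := by
        rw [hq_def]
        ring
      rw [this, ENNReal.ofReal_mul' hpos]
    calc ∫⁻ ω, ENNReal.ofReal (q n ω) ∂P
        = ∫⁻ ω, ENNReal.ofReal (Uz (Vn n ω) - u ω) * ENNReal.ofReal (εs n)⁻¹ ∂P :=
          lintegral_congr fun ω => e1 ω
      _ = (∫⁻ ω, ENNReal.ofReal (Uz (Vn n ω) - u ω) ∂P) * ENNReal.ofReal (εs n)⁻¹ :=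
          lintegral_mul_const _ (ENNReal.measurable_ofReal.comp
            ((hUz_meas.comp (hVn_meas n)).sub hu_meas))
      _ ≤ (∫⁻ ω, ENNReal.ofReal (-(Uz (Vn n ω) - u ω)) ∂P) * ENNReal.ofReal (εs n)⁻¹ :=
          mul_le_mul_left hg_le _
      _ = ∫⁻ ω, ENNReal.ofReal (-(Uz (Vn n ω) - u ω)) * ENNReal.ofReal (εs n)⁻¹ ∂P :=
          (lintegral_mul_const _ (ENNReal.measurable_ofReal.comp
            ((hUz_meas.comp (hVn_meas n)).sub hu_meas).neg)).symm
      _ = ∫⁻ ω, ENNReal.ofReal (-q n ω) ∂P := lintegral_congr fun ω => (e2 ω).symm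
  -- pointwise convergence of the difference quotients
  have hq_tendsto : ∀ᵐ ω ∂P,
      Tendsto (fun n => q n ω) atTop (𝓝 ((W ω - Vstar ω) * U' (Vstar ω))) := by
    filter_upwards [hVpos, hWα] with ω h0 hω
    have hF : HasDerivAt (fun t : ℝ => U (Vstar ω + t * (W ω - Vstar ω)))
        (U' (Vstar ω) * (1 * (W ω - Vstar ω))) 0 := by
      have hinner : HasDerivAt (fun t : ℝ => Vstar ω + t * (W ω - Vstar ω))
          (1 * (W ω - Vstar ω)) 0 :=
        ((hasDerivAt_id (0:ℝ)).mul_const (W ω - Vstar ω)).const_add (Vstar ω)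
      have houter : HasDerivAt U (U' (Vstar ω)) ((fun t : ℝ => Vstar ω + t * (W ω - Vstar ω)) 0) := by
        simp only [zero_mul, add_zero]
        exact hderiv _ h0
      exact HasDerivAt.comp 0 houter hinner
    have hslope := hasDerivAt_iff_tendsto_slope.1 hF
    have hεs_ne : Tendsto εs atTop (𝓝[≠] (0:ℝ)) := by
      refine tendsto_inf.2 ⟨hεs_lim, tendsto_principal.2 (Eventually.of_forall fun n => ?_)⟩
      simp [(hεs_pos n).ne']
    have hcomp := hslope.comp hεs_ne
    have hqeq : ∀ n, q n ω
        = slope (fun t : ℝ => U (Vstar ω + t * (W ω - Vstar ω))) 0 (εs n) := by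
      intro n
      have h1 := hεs_pos n
      have h2 := hεs_le n
      have hVn_pos : 0 < Vn n ω := by
        have hrfl : Vn n ω = (1 - εs n) * Vstar ω + εs n * W ω := rfl
        rw [hrfl]
        nlinarith [lt_of_lt_of_le hα hω]
      have hVn_eq : Vstar ω + εs n * (W ω - Vstar ω) = Vn n ω := by
        have hrfl : Vn n ω = (1 - εs n) * Vstar ω + εs n * W ω := rfl
        rw [hrfl]
        ring
      rw [slope_def_field]
      have e1 : U (Vstar ω + εs n * (W ω - Vstar ω)) = Uz (Vn n ω) := by
        rw [hVn_eq]
        simp [hUz_def, if_pos hVn_pos]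
      have e2 : U (Vstar ω + 0 * (W ω - Vstar ω)) = u ω := by
        rw [zero_mul, add_zero]
        simp [hu_def, hUz_def, if_pos h0]
      rw [e1, e2, sub_zero]
    have hval : U' (Vstar ω) * (1 * (W ω - Vstar ω)) = (W ω - Vstar ω) * U' (Vstar ω) := by
      ring
    rw [← hval]
    have : (fun n => q n ω)
        = (slope (fun t : ℝ => U (Vstar ω + t * (W ω - Vstar ω))) 0) ∘ εs := by
      funext n
      exact hqeq n
    rw [this]
    exact hcomp
  -- dominated convergence for the negative parts
  have h_bound : ∀ n, ∀ᵐ ω ∂P, ENNReal.ofReal (-q n ω) ≤ ENNReal.ofReal (φ ω) := by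
    intro n
    filter_upwards [hVpos, hWα] with ω h0 hω
    have h1 := hεs_pos n
    have h2 := hεs_le n
    have hrfl : Vn n ω = (1 - εs n) * Vstar ω + εs n * W ω := rfl
    have hVn_pos : 0 < Vn n ω := by
      rw [hrfl]
      nlinarith [lt_of_lt_of_le hα hω]
    have hUzn : Uz (Vn n ω) = U (Vn n ω) := by simp [hUz_def, if_pos hVn_pos]
    have hu_ω : u ω = U (Vstar ω) := by simp [hu_def, hUz_def, if_pos h0]
    rcases le_or_gt (Vstar ω) (W ω) with hVW | hVW
    · have hVle : Vstar ω ≤ Vn n ω := by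
        rw [hrfl]
        nlinarith [mul_le_mul_of_nonneg_left hVW h1.le]
      have hm := hUmono h0 hVle
      have : -q n ω ≤ 0 := by
        rw [hq_def]
        simp only
        rw [← neg_div]
        apply div_nonpos_of_nonpos_of_nonneg _ h1.le
        rw [hUzn, hu_ω]
        linarith
      exact le_trans (ENNReal.ofReal_le_ofReal (le_trans this (hφ_nn ω)))
        (le_refl _)
    · have hVα : α < Vstar ω := lt_of_le_of_lt hω hVW
      have hVn_geV2 : Vstar ω / 2 ≤ Vn n ω := by
        rw [hrfl]
        nlinarith [mul_nonneg h1.le (le_of_lt (lt_of_lt_of_le hα hω))]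
      have ht := tangent (Vn n ω) (Vstar ω) hVn_pos h0
      have hU'le : U' (Vn n ω) ≤ U' (Vstar ω / 2) := hU'anti _ _ (by linarith) hVn_geV2
      have hU'nn : 0 ≤ U' (Vn n ω) := (hU'pos _ hVn_pos).le
      have hU'V2nn : 0 ≤ U' (Vstar ω / 2) := (hU'pos _ (by linarith)).le
      have hq2 := hxU' (Vstar ω) hVα
      have hφω : φ ω = 4 * max (U (Vstar ω)) 0 + 4 * |U (α/4)| := by
        simp only [hφ_def, hu_ω]
      have hVmVn : Vstar ω - Vn n ω = εs n * (Vstar ω - W ω) := by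
        rw [hrfl]
        ring
      have hkey : -q n ω ≤ φ ω := by
        have hstep : U (Vstar ω) - U (Vn n ω) ≤ εs n * φ ω := by
          have c1 : U' (Vn n ω) * (Vstar ω - W ω) ≤ U' (Vstar ω / 2) * (Vstar ω - W ω) :=
            mul_le_mul_of_nonneg_right hU'le (by linarith)
          have c2 : U' (Vstar ω / 2) * (Vstar ω - W ω) ≤ U' (Vstar ω / 2) * Vstar ω :=
            mul_le_mul_of_nonneg_left (by linarith [lt_of_lt_of_le hα hω]) hU'V2nn
          have c3 : U' (Vn n ω) * (Vstar ω - Vn n ω)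
              = εs n * (U' (Vn n ω) * (Vstar ω - W ω)) := by
            rw [hVmVn]; ring
          have c4 : εs n * (U' (Vn n ω) * (Vstar ω - W ω)) ≤ εs n * φ ω := by
            apply mul_le_mul_of_nonneg_left _ h1.le
            rw [hφω]
            calc U' (Vn n ω) * (Vstar ω - W ω) ≤ U' (Vstar ω / 2) * Vstar ω := c1.trans c2
              _ = Vstar ω * U' (Vstar ω / 2) := mul_comm _ _
              _ ≤ _ := hq2
          linarith [ht, c3]
        have hq' : -q n ω = (U (Vstar ω) - U (Vn n ω)) / εs n := by
          rw [hq_def]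
          simp only
          rw [hUzn, hu_ω]
          ring
        rw [hq', div_le_iff₀ h1]
        nlinarith [hstep]
      exact ENNReal.ofReal_le_ofReal hkey
  have h_fin : ∫⁻ ω, ENNReal.ofReal (φ ω) ∂P ≠ ⊤ := lint_ofReal_ne_top' hφ_int
  have h_lim : ∀ᵐ ω ∂P, Tendsto (fun n => ENNReal.ofReal (-q n ω)) atTop
      (𝓝 (ENNReal.ofReal (max (Vstar ω - W ω) 0 * U' (Vstar ω)))) := by
    filter_upwards [hq_tendsto, hVpos] with ω htd h0
    have hneg : Tendsto (fun n => -q n ω) atTop (𝓝 (-((W ω - Vstar ω) * U' (Vstar ω)))) :=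
      htd.neg
    have hcont := (ENNReal.continuous_ofReal.tendsto _).comp hneg
    have hU'nn : 0 ≤ U' (Vstar ω) := (hU'pos _ h0).le
    have heq : ENNReal.ofReal (-((W ω - Vstar ω) * U' (Vstar ω)))
        = ENNReal.ofReal (max (Vstar ω - W ω) 0 * U' (Vstar ω)) := by
      rcases le_total (W ω) (Vstar ω) with hc | hc
      · have hm : max (Vstar ω - W ω) 0 = Vstar ω - W ω := max_eq_left (by linarith)
        rw [hm]
        congr 1
        ring
      · have hm : max (Vstar ω - W ω) 0 = 0 := max_eq_right (by linarith)
        rw [hm, zero_mul]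
        have hnp : -((W ω - Vstar ω) * U' (Vstar ω)) ≤ 0 := by
          have := mul_nonneg (by linarith : (0:ℝ) ≤ W ω - Vstar ω) hU'nn
          linarith
        rw [ENNReal.ofReal_zero]
        exact ENNReal.ofReal_eq_zero.2 hnp
    rw [heq] at hcont
    exact hcont
  have hRHS_tendsto : Tendsto (fun n => ∫⁻ ω, ENNReal.ofReal (-q n ω) ∂P) atTop
      (𝓝 (∫⁻ ω, ENNReal.ofReal (max (Vstar ω - W ω) 0 * U' (Vstar ω)) ∂P)) :=
    tendsto_lintegral_of_dominated_convergence (fun ω => ENNReal.ofReal (φ ω))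
      (fun n => ENNReal.measurable_ofReal.comp (hq_meas n).neg) h_bound h_fin h_lim
  have hLHS_ae : ∀ᵐ ω ∂P, ENNReal.ofReal (max (W ω - Vstar ω) 0 * U' (Vstar ω))
      = Filter.liminf (fun n => ENNReal.ofReal (q n ω)) atTop := by
    filter_upwards [hq_tendsto, hVpos] with ω htd h0
    have hcont := (ENNReal.continuous_ofReal.tendsto _).comp htd
    have hU'nn : 0 ≤ U' (Vstar ω) := (hU'pos _ h0).le
    have heq : ENNReal.ofReal (max (W ω - Vstar ω) 0 * U' (Vstar ω))
        = ENNReal.ofReal ((W ω - Vstar ω) * U' (Vstar ω)) := by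
      rcases le_total (Vstar ω) (W ω) with hc | hc
      · rw [max_eq_left (by linarith)]
      · rw [max_eq_right (by linarith), zero_mul]
        have hnp : (W ω - Vstar ω) * U' (Vstar ω) ≤ 0 :=
          mul_nonpos_iff.2 (Or.inr ⟨by linarith, hU'nn⟩)
        rw [ENNReal.ofReal_zero]
        exact (ENNReal.ofReal_eq_zero.2 hnp).symm
    rw [heq]
    exact hcont.liminf_eq.symm
  calc ∫⁻ ω, ENNReal.ofReal (max (W ω - Vstar ω) 0 * U' (Vstar ω)) ∂P
      = ∫⁻ ω, Filter.liminf (fun n => ENNReal.ofReal (q n ω)) atTop ∂P :=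
        lintegral_congr_ae hLHS_ae
    _ ≤ Filter.liminf (fun n => ∫⁻ ω, ENNReal.ofReal (q n ω) ∂P) atTop :=
        lintegral_liminf_le fun n => ENNReal.measurable_ofReal.comp (hq_meas n)
    _ ≤ Filter.liminf (fun n => ∫⁻ ω, ENNReal.ofReal (-q n ω) ∂P) atTop :=
        liminf_le_liminf (Eventually.of_forall hq_le)
    _ = _ := hRHS_tendsto.liminf_eq
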